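/- (Recursion for the projected mean mismatch.) Let Σ, Σ̂ be real symmetric positive semidefinite n×n matrices, û a unit eigenvector of Σ̂ with eigenvalue λ̂ ≥ 0, β > 0, σ > 0, and a = √β·û. Let μ, μ̂ ∈ ℝⁿ, y ∈ ℝ, and define the one-step mean updates μ̂′ = μ̂ + Σ̂ a (y − aᵀμ̂)/(βλ̂ + σ²) and μ′ = μ + Σ a (y − aᵀμ)/(aᵀΣa + σ²). Write c = aᵀ(Σ̂ − Σ)a, z = y − aᵀμ, and δ = ‖Σ̂ − Σ‖. If β·δ < βλ̂ + σ², then aᵀ(μ̂′ − μ′) = (σ²/(βλ̂ + σ²))·[ aᵀ(μ̂ − μ) + c·z/(βλ̂ + σ² − c) ], and consequently |aᵀ(μ̂′ − μ′)| ≤ (1/(λ̂β/σ² + 1))·[ |aᵀ(μ̂ − μ)| + δ·|z|/((λ̂ − δ) + σ²/β) ]. -/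

import Mathlib

open MeasureTheory ProbabilityTheory Matrix BigOperators

/-- Spectral (ℓ²-operator) norm of a real square matrix. -/
noncomputable def specNorm {n : ℕ} (A : Matrix (Fin n) (Fin n) ℝ) : ℝ :=
  ‖LinearMap.toContinuousLinearMap (Matrix.toEuclideanLin A)‖

lemma quad_bound {n : ℕ} (M : Matrix (Fin n) (Fin n) ℝ) (a : Fin n → ℝ) :
    |a ⬝ᵥ M.mulVec a| ≤ specNorm M * (a ⬝ᵥ a) := by
  set L := LinearMap.toContinuousLinearMap (Matrix.toEuclideanLin M)
  set a' : EuclideanSpace ℝ (Fin n) := (WithLp.equiv 2 (Fin n → ℝ)).symm a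
  have h1 : a ⬝ᵥ M.mulVec a = inner ℝ a' (L a') := by
    simp [L, a', Matrix.toEuclideanLin_apply, PiLp.inner_apply, dotProduct, mul_comm,
      RCLike.inner_apply, Finset.mul_sum]
  have h2 : a ⬝ᵥ a = ‖a'‖ ^ 2 := by
    rw [← real_inner_self_eq_norm_sq]
    simp [a', PiLp.inner_apply, dotProduct, RCLike.inner_apply]
    rw [EuclideanSpace.norm_eq, Real.sq_sqrt (by positivity)]
    simp [sq]
  rw [h1, h2]
  calc |inner ℝ a' (L a')| ≤ ‖a'‖ * ‖L a'‖ := abs_real_inner_le_norm a' (L a')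
    _ ≤ ‖a'‖ * (‖L‖ * ‖a'‖) := by gcongr; exact L.le_opNorm a'
    _ = ‖L‖ * ‖a'‖ ^ 2 := by ring

/-- Recursion for the projected mean mismatch. -/
theorem stmt15 {n : ℕ} (S Shat : Matrix (Fin n) (Fin n) ℝ)
    (hS : S.PosSemidef) (hShat : Shat.PosSemidef)
    (uhat : Fin n → ℝ) (hu : uhat ⬝ᵥ uhat = 1)
    (lamhat : ℝ) (hlam : 0 ≤ lamhat) (heig : Shat.mulVec uhat = lamhat • uhat)
    (β σ : ℝ) (hβ : 0 < β) (hσ : 0 < σ)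
    (a : Fin n → ℝ) (ha : a = Real.sqrt β • uhat)
    (μ μhat : Fin n → ℝ) (y : ℝ)
    (μhat' μ' : Fin n → ℝ)
    (hμhat' : μhat' = μhat + ((β * lamhat + σ ^ 2)⁻¹ * (y - a ⬝ᵥ μhat)) • Shat.mulVec a)
    (hμ' : μ' = μ + ((a ⬝ᵥ S.mulVec a + σ ^ 2)⁻¹ * (y - a ⬝ᵥ μ)) • S.mulVec a)
    (c z δ : ℝ)
    (hc : c = a ⬝ᵥ (Shat - S).mulVec a) (hz : z = y - a ⬝ᵥ μ)
    (hδ : δ = specNorm (Shat - S))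
    (hsmall : β * δ < β * lamhat + σ ^ 2) :
    a ⬝ᵥ (μhat' - μ') = (σ ^ 2 / (β * lamhat + σ ^ 2)) *
        (a ⬝ᵥ (μhat - μ) + c * z / (β * lamhat + σ ^ 2 - c)) ∧
      |a ⬝ᵥ (μhat' - μ')| ≤ (1 / (lamhat * β / σ ^ 2 + 1)) *
        (|a ⬝ᵥ (μhat - μ)| + δ * |z| / ((lamhat - δ) + σ ^ 2 / β)) := by
  have hσ2 : (0:ℝ) < σ ^ 2 := by positivity
  set D : ℝ := β * lamhat + σ ^ 2 with hD
  have hDpos : 0 < D := by positivity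
  set t : ℝ := a ⬝ᵥ S.mulVec a with htdef
  have hsb : Real.sqrt β * Real.sqrt β = β := Real.mul_self_sqrt hβ.le
  have haa : a ⬝ᵥ a = β := by
    rw [ha, smul_dotProduct, dotProduct_smul, hu]
    simp [hsb]
  have hASa : a ⬝ᵥ Shat.mulVec a = β * lamhat := by
    rw [ha, smul_dotProduct, Matrix.mulVec_smul, dotProduct_smul, heig, dotProduct_smul, hu]
    simp only [smul_eq_mul, mul_one]
    rw [← mul_assoc, hsb]
  have ht0 : 0 ≤ t := by
    have := hS.dotProduct_mulVec_nonneg a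
    simpa [star] using this
  have hct : c = β * lamhat - t := by
    rw [hc, Matrix.sub_mulVec, dotProduct_sub, hASa, htdef]
  have hcabs : |c| ≤ β * δ := by
    have h := quad_bound (Shat - S) a
    rw [haa, ← hδ] at h
    rw [hc, mul_comm β δ]; exact h
  have htσ : (0:ℝ) < t + σ ^ 2 := by positivity
  have hDc : D - c = t + σ ^ 2 := by rw [hct]; ring
  -- first part
  have hmd : a ⬝ᵥ (μhat - μ) = a ⬝ᵥ μhat - a ⬝ᵥ μ := dotProduct_sub a _ _
  have hkey : a ⬝ᵥ (μhat' - μ') = (σ ^ 2 / D) *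
      (a ⬝ᵥ (μhat - μ) + c * z / (D - c)) := by
    rw [dotProduct_sub, hμhat', hμ', dotProduct_add, dotProduct_add, dotProduct_smul,
      dotProduct_smul, smul_eq_mul, smul_eq_mul, hASa, ← htdef, hmd, hDc, hz, hct]
    have h1 : D ≠ 0 := ne_of_gt hDpos
    have h2 : t + σ ^ 2 ≠ 0 := ne_of_gt htσ
    field_simp
    ring
  refine ⟨hkey, ?_⟩
  -- second part
  have hDβδ : 0 < D - β * δ := by linarith
  have hδ0 : 0 ≤ δ := by
    rw [hδ, specNorm]; exact norm_nonneg _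
  have hr1 : 1 / (lamhat * β / σ ^ 2 + 1) = σ ^ 2 / D := by
    rw [hD]; field_simp
  have hβ0 : β ≠ 0 := hβ.ne'
  have hA : (lamhat - δ) + σ ^ 2 / β = (D - β * δ) / β := by
    rw [hD]; field_simp; ring
  have hr2 : δ * |z| / ((lamhat - δ) + σ ^ 2 / β) = β * δ * |z| / (D - β * δ) := by
    rw [hA, div_div_eq_mul_div]; ring
  rw [hr1, hr2, hkey]
  rw [abs_mul, abs_of_pos (by positivity : (0:ℝ) < σ ^ 2 / D)]
  apply mul_le_mul_of_nonneg_left _ (by positivity)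
  calc |a ⬝ᵥ (μhat - μ) + c * z / (D - c)|
      ≤ |a ⬝ᵥ (μhat - μ)| + |c * z / (D - c)| := abs_add_le _ _
    _ ≤ |a ⬝ᵥ (μhat - μ)| + β * δ * |z| / (D - β * δ) := by
        gcongr _ + ?_
        have hDcpos : (0:ℝ) < D - c := by rw [hDc]; exact htσ
        rw [abs_div, abs_mul, abs_of_pos hDcpos]
        rw [div_le_div_iff₀ hDcpos hDβδ]
        have hc1 : c ≤ β * δ := le_trans (le_abs_self c) hcabs
        have hz0 : 0 ≤ |z| := abs_nonneg z
        have e1 : 0 ≤ |z| * (D * (β * δ - |c|)) :=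
          mul_nonneg hz0 (mul_nonneg hDpos.le (by linarith))
        have e2 : 0 ≤ |z| * (β * δ * (|c| - c)) :=
          mul_nonneg hz0 (mul_nonneg (by positivity) (by linarith [le_abs_self c]))
        nlinarith [e1, e2]
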